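/- Let $a,b>0$ with $a+b=1$ and $a$ irrational, and let $K$ be any positive integer. For every $p\in\mathbb{Z}$ and $I=[pK,(p+1)K)$, the number of points of $\mathbb{Z}+1/2$ in $I$ equals the number of points of $(\mathbb{Z}+1/2)/a$ in $I$ plus the number of points of $(\mathbb{Z}+1/2)/b$ in $I$, namely $K$. -/

import Mathlib

lemma count_half (x y : ℝ) :
    {n : ℤ | ((n : ℝ) + 1/2) ∈ Set.Ico x y}.ncard = (⌈y - 1/2⌉ - ⌈x - 1/2⌉).toNat := by
  have hset : {n : ℤ | ((n : ℝ) + 1/2) ∈ Set.Ico x y} = Set.Ico ⌈x - 1/2⌉ ⌈y - 1/2⌉ := by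
    ext n
    simp only [Set.mem_setOf_eq, Set.mem_Ico, Int.ceil_le, Int.lt_ceil]
    constructor
    · rintro ⟨h1, h2⟩; exact ⟨by linarith, by linarith⟩
    · rintro ⟨h1, h2⟩; exact ⟨by linarith, by linarith⟩
  rw [hset, ← Finset.coe_Ico, Set.ncard_coe_finset, Int.card_Ico]

lemma ceil_of_not_int {t : ℝ} (ht : Irrational t) : ⌈t⌉ = ⌊t⌋ + 1 := by
  have h1 : ⌈t⌉ ≤ ⌊t⌋ + 1 := Int.ceil_le_floor_add_one t
  have h2 : (⌊t⌋ : ℝ) < t := lt_of_le_of_ne (Int.floor_le t) (fun h => (ht.ne_int ⌊t⌋ h.symm))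
  have h3 : ⌊t⌋ < ⌈t⌉ := by exact_mod_cast h2.trans_le (Int.le_ceil t)
  omega

lemma key (a b : ℝ) (ha : Irrational a) (hab : a + b = 1) (m : ℤ) :
    ⌈a * m - 1/2⌉ + ⌈b * m - 1/2⌉ = m := by
  rcases eq_or_ne m 0 with rfl | hm
  · norm_num
  · have hb : b = 1 - a := by linarith
    have hirr : Irrational (a * m) := by
      have := ha.intCast_mul hm
      rwa [mul_comm] at this
    have hirr2 : Irrational (a * m - 1/2) := by
      have : Irrational (a * m - (1/2 : ℚ)) := hirr.sub_ratCast _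
      simpa using this
    have heq : b * m - 1/2 = -((a * m - 1/2) - ((m - 1 : ℤ) : ℝ)) := by
      push_cast; rw [hb]; ring
    rw [heq, Int.ceil_neg, Int.floor_sub_intCast, ceil_of_not_int hirr2]
    omega

lemma ceil_int_sub_half (m : ℤ) : ⌈(m : ℝ) - 1/2⌉ = m := by
  rw [show (m:ℝ) - 1/2 = (-1/2 : ℝ) + m by ring, Int.ceil_add_intCast]
  norm_num

lemma div_set_eq (c : ℝ) (hc : 0 < c) (x y : ℝ) :
    {n : ℤ | ((n : ℝ) + 1/2) / c ∈ Set.Ico x y} =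
    {n : ℤ | ((n : ℝ) + 1/2) ∈ Set.Ico (c * x) (c * y)} := by
  ext n
  simp only [Set.mem_setOf_eq, Set.mem_Ico]
  rw [le_div_iff₀ hc, div_lt_iff₀ hc]
  constructor
  · rintro ⟨h1, h2⟩; exact ⟨by nlinarith, by nlinarith⟩
  · rintro ⟨h1, h2⟩; exact ⟨by nlinarith, by nlinarith⟩

theorem local_counting_identity (a b : ℝ) (ha : Irrational a) (h0 : 0 < a)
    (hab : a + b = 1) (hb : 0 < b) (K : ℕ) (hK : 0 < K) :
    ∀ p : ℤ,
      ({n : ℤ | ((n : ℝ) + 1/2) ∈ Set.Ico ((p : ℝ) * K) (((p : ℝ) + 1) * K)}.ncard =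
          {n : ℤ | ((n : ℝ) + 1/2) / a ∈ Set.Ico ((p : ℝ) * K) (((p : ℝ) + 1) * K)}.ncard +
          {n : ℤ | ((n : ℝ) + 1/2) / b ∈ Set.Ico ((p : ℝ) * K) (((p : ℝ) + 1) * K)}.ncard) ∧
      {n : ℤ | ((n : ℝ) + 1/2) ∈ Set.Ico ((p : ℝ) * K) (((p : ℝ) + 1) * K)}.ncard = K := by
  intro p
  set x : ℤ := p * K with hx
  set y : ℤ := (p + 1) * K with hy
  have hxr : ((p : ℝ) * K) = (x : ℝ) := by push_cast [hx]; ring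
  have hyr : (((p : ℝ) + 1) * K) = (y : ℝ) := by push_cast [hy]; ring
  have hK' : (0:ℤ) < K := by exact_mod_cast hK
  have hxy : x ≤ y := by nlinarith
  have hyx : y - x = K := by rw [hx, hy]; ring
  have hxyr : (x:ℝ) ≤ y := by exact_mod_cast hxy
  -- plain count
  have hplain : {n : ℤ | ((n : ℝ) + 1/2) ∈ Set.Ico ((p : ℝ) * K) (((p : ℝ) + 1) * K)}.ncard = K := by
    rw [count_half, hxr, hyr, ceil_int_sub_half, ceil_int_sub_half, hyx]
    exact Int.toNat_natCast K
  refine ⟨?_, hplain⟩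
  rw [hplain]
  have ca : {n : ℤ | ((n : ℝ) + 1/2) / a ∈ Set.Ico ((p : ℝ) * K) (((p : ℝ) + 1) * K)}.ncard
      = (⌈a * y - 1/2⌉ - ⌈a * x - 1/2⌉).toNat := by
    rw [hxr, hyr, div_set_eq a h0, count_half]
  have cb : {n : ℤ | ((n : ℝ) + 1/2) / b ∈ Set.Ico ((p : ℝ) * K) (((p : ℝ) + 1) * K)}.ncard
      = (⌈b * y - 1/2⌉ - ⌈b * x - 1/2⌉).toNat := by
    rw [hxr, hyr, div_set_eq b hb, count_half]
  rw [ca, cb]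
  have kx := key a b ha hab x
  have ky := key a b ha hab y
  have ma : ⌈a * x - 1/2⌉ ≤ ⌈a * y - 1/2⌉ := by
    apply Int.ceil_le_ceil
    nlinarith
  have mb : ⌈b * x - 1/2⌉ ≤ ⌈b * y - 1/2⌉ := by
    apply Int.ceil_le_ceil
    nlinarith
  omega
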